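/- Let G be the group with presentation ⟨s₁,s₂,s₃,h | [sₖ,h] for 1≤k≤3, s₁²h, s₂⁴h, s₃⁴h, s₁s₂s₃h⟩, and let φ₃ : G → ℤ/2 be the epimorphism with φ₃(s₁)=0, φ₃(s₂)=φ₃(s₃)=1, φ₃(h)=0. Then φ₃ factors through ℤ via the homomorphism ψ with ψ(s₁)=2, ψ(s₂)=ψ(s₃)=1, ψ(h)=-4. -/
import Mathlib


open FreeGroup

/-- Relators of π₁(M₄) = ⟨s₁,s₂,s₃,h | [sₖ,h] (1≤k≤3), s₁²h, s₂⁴h, s₃⁴h, s₁s₂s₃h⟩,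
generators s₁=0, s₂=1, s₃=2, h=3. -/
def relsM4 : Set (FreeGroup (Fin 4)) :=
  { of 0 * of 3 * (of 0)⁻¹ * (of 3)⁻¹,
    of 1 * of 3 * (of 1)⁻¹ * (of 3)⁻¹,
    of 2 * of 3 * (of 2)⁻¹ * (of 3)⁻¹,
    of 0 ^ 2 * of 3, of 1 ^ 4 * of 3, of 2 ^ 4 * of 3,
    of 0 * of 1 * of 2 * of 3 }

/-- Reduction mod 2, multiplicatively. -/
def mod2 : Multiplicative ℤ →* Multiplicative (ZMod 2) :=
  AddMonoidHom.toMultiplicative (Int.castAddHom (ZMod 2))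


def fψ : Fin 4 → Multiplicative ℤ :=
  ![Multiplicative.ofAdd 2, Multiplicative.ofAdd 1, Multiplicative.ofAdd 1, Multiplicative.ofAdd (-4)]

lemma fψ_rels : ∀ r ∈ relsM4, FreeGroup.lift fψ r = 1 := by
  intro r hr
  rcases hr with h|h|h|h|h|h|h <;> subst h <;>
    simp [fψ, ← ofAdd_add, ← ofAdd_neg] <;> decide

/-- The epimorphism φ₃ of π₁(M₄) with values (0,1,1,0) on (s₁,s₂,s₃,h) factors
through ℤ via ψ with ψ(s₁)=2, ψ(s₂)=ψ(s₃)=1, ψ(h)=-4. -/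
theorem stmt8 (φ : PresentedGroup relsM4 →* Multiplicative (ZMod 2))
    (h1 : φ (PresentedGroup.of 0) = Multiplicative.ofAdd (0 : ZMod 2))
    (h2 : φ (PresentedGroup.of 1) = Multiplicative.ofAdd (1 : ZMod 2))
    (h3 : φ (PresentedGroup.of 2) = Multiplicative.ofAdd (1 : ZMod 2))
    (h4 : φ (PresentedGroup.of 3) = Multiplicative.ofAdd (0 : ZMod 2)) :
    ∃ ψ : PresentedGroup relsM4 →* Multiplicative ℤ,
      ψ (PresentedGroup.of 0) = Multiplicative.ofAdd (2 : ℤ) ∧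
      ψ (PresentedGroup.of 1) = Multiplicative.ofAdd (1 : ℤ) ∧
      ψ (PresentedGroup.of 2) = Multiplicative.ofAdd (1 : ℤ) ∧
      ψ (PresentedGroup.of 3) = Multiplicative.ofAdd (-4 : ℤ) ∧
      φ = mod2.comp ψ := by

  refine ⟨PresentedGroup.toGroup fψ_rels, ?_, ?_, ?_, ?_, ?_⟩
  · simp [PresentedGroup.toGroup.of, fψ]
  · simp [PresentedGroup.toGroup.of, fψ]
  · simp [PresentedGroup.toGroup.of, fψ]
  · simp [PresentedGroup.toGroup.of, fψ]
  · apply PresentedGroup.ext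
    intro x
    fin_cases x <;>
      simp [h1, h2, h3, h4, PresentedGroup.toGroup.of, fψ, mod2] <;> decide
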